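/- No-trade condition sufficiency for linear utility: if U(z) = πᵀz with π > 0, and there exists α > 0 with γp ≤ απ ≤ p (componentwise), where p = ∇φ(R)/∇φ(R)ₙ, then (Δ, Λ) = (0, 0) is optimal for the relaxed trading problem: every feasible (Δ, Λ) (i.e., Δ, Λ ≥ 0 with φ(R + γΔ − Λ) ≥ φ(R)) satisfies πᵀ(Λ − Δ) ≤ 0. -/

import Mathlib

open scoped RealInnerProductSpace

lemma concave_grad_ineq {E : Type*} [NormedAddCommGroup E] [InnerProductSpace ℝ E] [CompleteSpace E]
    {S : Set E} {φ : E → ℝ} (hc : ConcaveOn ℝ S φ) {x y : E} (hx : x ∈ S) (hy : y ∈ S)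
    {gx : E} (hg : HasGradientAt φ gx x) : φ y ≤ φ x + ⟪gx, y - x⟫ := by
  set f : ℝ → ℝ := fun t => φ (x + t • (y - x)) with hf
  have hc' : HasDerivAt (fun t : ℝ => x + t • (y - x)) (y - x) 0 := by
    simpa using ((hasDerivAt_id (0:ℝ)).smul_const (y - x)).const_add x
  have hx0 : x + (0:ℝ) • (y - x) = x := by simp
  have hd : HasDerivAt f ⟪gx, y - x⟫ 0 := by
    have hF : HasFDerivAt φ (InnerProductSpace.toDual ℝ E gx) (x + (0:ℝ) • (y - x)) := by
      rw [hx0]; exact hg.hasFDerivAt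
    have := hF.comp_hasDerivAt 0 hc'
    simpa [hf, InnerProductSpace.toDual_apply_apply, Function.comp_def] using this
  rw [hasDerivAt_iff_tendsto_slope] at hd
  have hd' : Filter.Tendsto (slope f 0) (nhdsWithin 0 (Set.Ioi 0)) (nhds ⟪gx, y - x⟫) :=
    hd.mono_left (nhdsWithin_mono _ (fun t ht => ne_of_gt ht))
  have key : φ y - φ x ≤ ⟪gx, y - x⟫ := by
    refine ge_of_tendsto hd' ?_
    filter_upwards [Ioc_mem_nhdsGT_of_mem (Set.mem_Ico.mpr ⟨le_refl 0, one_pos⟩)] with t ht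
    obtain ⟨ht0, ht1⟩ := ht
    have hcc := hc.2 hx hy (by linarith : (0:ℝ) ≤ 1 - t) ht0.le (by ring)
    have heq : (1 - t) • x + t • y = x + t • (y - x) := by
      simp [smul_sub, sub_smul]; abel
    rw [heq] at hcc
    rw [smul_eq_mul, smul_eq_mul] at hcc
    have hft : φ x + t * (φ y - φ x) ≤ f t := by
      simp only [hf]; nlinarith
    have hslope : slope f 0 t = (f t - f 0) / t := by
      simp [slope_def_field]
    rw [hslope, le_div_iff₀ ht0]
    have hf0 : f 0 = φ x := by simp only [hf]; rw [hx0]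
    nlinarith
  linarith

/-- No-trade condition sufficiency for linear utility: if there exists `α > 0`
with `γp ≤ απ ≤ p` componentwise, then the zero trade is optimal: every feasible
trade has nonpositive utility gain `πᵀ(Λ − Δ) ≤ 0`. -/
theorem no_trade_condition_linear_utility {n : ℕ}
    (φ : EuclideanSpace ℝ (Fin (n + 1)) → ℝ)
    (g : EuclideanSpace ℝ (Fin (n + 1)) → EuclideanSpace ℝ (Fin (n + 1)))
    (hconc : ConcaveOn ℝ {x : EuclideanSpace ℝ (Fin (n + 1)) | ∀ i, 0 ≤ x i} φ)
    (hgrad : ∀ x, (∀ i, 0 ≤ x i) → HasGradientAt φ (g x) x)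
    (hmono : ∀ x y : EuclideanSpace ℝ (Fin (n + 1)), (∀ i, x i ≤ y i) → φ x ≤ φ y)
    (γ : ℝ) (hγ : γ ∈ Set.Ioc (0 : ℝ) 1)
    (R : EuclideanSpace ℝ (Fin (n + 1))) (hR : ∀ i, 0 ≤ R i)
    (hgpos : ∀ i, 0 < g R i)
    (π : Fin (n + 1) → ℝ) (hπ : ∀ i, 0 < π i)
    (α : ℝ) (hα : 0 < α)
    (hno : ∀ i, γ * (g R i / g R (Fin.last n)) ≤ α * π i ∧
      α * π i ≤ g R i / g R (Fin.last n)) :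
    ∀ Δ Λ : EuclideanSpace ℝ (Fin (n + 1)), (∀ i, 0 ≤ Δ i) → (∀ i, 0 ≤ Λ i) →
      (∀ i, 0 ≤ (R + γ • Δ - Λ) i) →
      φ (R + γ • Δ - Λ) ≥ φ R →
      ∑ i, π i * (Λ i - Δ i) ≤ 0 := by
  intro Δ Λ hΔ hΛ hfeas hφ
  set gn := g R (Fin.last n) with hgn
  have hgnpos : 0 < gn := hgpos _
  have key := concave_grad_ineq hconc hR hfeas (hgrad R hR)
  have hdiff : (R + γ • Δ - Λ) - R = γ • Δ - Λ := by abel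
  rw [hdiff] at key
  have hin : ⟪g R, γ • Δ - Λ⟫ = ∑ i, g R i * (γ * Δ i - Λ i) := by
    rw [PiLp.inner_apply]
    apply Finset.sum_congr rfl
    intro i _
    simp [RCLike.inner_apply, mul_comm]
  have hpos : 0 ≤ ∑ i, g R i * (γ * Δ i - Λ i) := by
    rw [← hin]; linarith
  have h1 : ∀ i, gn * (α * (π i * (Λ i - Δ i))) ≤ -(g R i * (γ * Δ i - Λ i)) := by
    intro i
    obtain ⟨hl, hr⟩ := hno i
    have hl' : γ * g R i ≤ α * π i * gn := by
      rw [mul_div_assoc'] at hl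
      exact (div_le_iff₀ hgnpos).mp hl
    have hr' : α * π i * gn ≤ g R i := (le_div_iff₀ hgnpos).mp hr
    nlinarith [hΛ i, hΔ i]
  have hsum := Finset.sum_le_sum (fun i (_ : i ∈ Finset.univ) => h1 i)
  rw [← Finset.mul_sum, ← Finset.mul_sum, Finset.sum_neg_distrib] at hsum
  have h2 : gn * (α * ∑ i, π i * (Λ i - Δ i)) ≤ 0 := le_trans hsum (by linarith)
  nlinarith [mul_pos hgnpos hα]
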